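/- (Violated Hoffman cut from the APM limit orbit.) Under the closest-pair setup with X ∩ Y_p = ∅ and assuming Σ_t p_t = Σ_n E_n, the pair (T₀, N₀) defines a Hoffman cut violated by p: Σ_{n∈N₀} E_n − Σ_{t∈T₀} p_t + Σ_{t∈T₀, n∉N₀} x̄_{n,t} − Σ_{t∉T₀, n∈N₀} x̲_{n,t} < 0. -/
import Mathlib


open Finset

/-- Frobenius (Euclidean) norm on `ℝ^{N×T}`. -/
noncomputable def frobNorm {N T : ℕ} (a : Fin N → Fin T → ℝ) : ℝ :=
  Real.sqrt (∑ n, ∑ t, (a n t) ^ 2)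

private lemma expand_sum {N T : ℕ} (d w : Fin N → Fin T → ℝ) :
    ∑ n, ∑ t, (d n t + w n t)^2
      = (∑ n, ∑ t, (d n t)^2) + 2*(∑ n, ∑ t, d n t * w n t) + ∑ n, ∑ t, (w n t)^2 := by
  have h1 : ∀ n : Fin N, ∑ t, (d n t + w n t)^2
      = (∑ t, (d n t)^2) + 2*(∑ t, d n t * w n t) + ∑ t, (w n t)^2 := by
    intro n
    rw [Finset.mul_sum, ← Finset.sum_add_distrib, ← Finset.sum_add_distrib]
    exact Finset.sum_congr rfl fun t _ => by ring
  rw [Finset.sum_congr rfl fun n _ => h1 n, Finset.mul_sum,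
    ← Finset.sum_add_distrib, ← Finset.sum_add_distrib]

/-- **Violated Hoffman cut from the APM limit orbit.**
Under the closest-pair setup with `X ∩ Y_p = ∅` and assuming `Σ_t p_t = Σ_n E_n`,
the pair `(T₀, N₀)` defines a Hoffman cut violated by `p`:
`Σ_{n∈N₀} E_n − Σ_{t∈T₀} p_t + Σ_{t∈T₀, n∉N₀} x̄_{n,t} − Σ_{t∉T₀, n∈N₀} x̲_{n,t} < 0`. -/
theorem violated_hoffman_cut
    (N T : ℕ) (hN : 0 < N) (hT : 0 < T)
    (E : Fin N → ℝ) (lb ub : Fin N → Fin T → ℝ)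
    (hbounds : ∀ n t, lb n t ≤ ub n t)
    (hXn_nonempty : ∀ n, (∑ t, lb n t) ≤ E n ∧ E n ≤ ∑ t, ub n t)
    (p : Fin T → ℝ) (hpE : (∑ t, p t) = ∑ n, E n)
    (X : Set (Fin N → Fin T → ℝ))
    (hXdef : X = {ℓ | ∀ n, (∑ t, ℓ n t) = E n ∧ ∀ t, lb n t ≤ ℓ n t ∧ ℓ n t ≤ ub n t})
    (Y : Set (Fin N → Fin T → ℝ))
    (hYdef : Y = {z | ∀ t, (∑ n, z n t) = p t})
    (hdisjoint : X ∩ Y = ∅)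
    (xinf yinf : Fin N → Fin T → ℝ)
    (hxinfX : xinf ∈ X) (hyinfY : yinf ∈ Y)
    (hclosest : frobNorm (xinf - yinf)
      = sInf {d : ℝ | ∃ a ∈ X, ∃ b ∈ Y, d = frobNorm (a - b)})
    (T0 : Finset (Fin T))
    (hT0 : T0 = univ.filter fun t => (∑ n, xinf n t) < p t)
    (N0 : Finset (Fin N))
    (hN0 : N0 = univ.filter fun n =>
      E n < (∑ t ∈ T0ᶜ, lb n t) + ∑ t ∈ T0, ub n t) :
    (∑ n ∈ N0, E n) - (∑ t ∈ T0, p t)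
        + (∑ t ∈ T0, ∑ n ∈ N0ᶜ, ub n t)
        - (∑ t ∈ T0ᶜ, ∑ n ∈ N0, lb n t) < 0 := by
  -- unfolded memberships
  have hx : ∀ n, (∑ t, xinf n t) = E n ∧ ∀ t, lb n t ≤ xinf n t ∧ xinf n t ≤ ub n t := by
    have := hxinfX; rw [hXdef] at this; exact this
  have hy : ∀ t, (∑ n, yinf n t) = p t := by
    have := hyinfY; rw [hYdef] at this; exact this
  -- squared-norm minimality
  have hmin : ∀ a ∈ X, ∀ b ∈ Y,
      (∑ n, ∑ t, (xinf n t - yinf n t)^2) ≤ ∑ n, ∑ t, (a n t - b n t)^2 := by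
    intro a ha b hb
    have hle : frobNorm (xinf - yinf) ≤ frobNorm (a - b) := by
      rw [hclosest]
      refine csInf_le ⟨0, ?_⟩ ⟨a, ha, b, hb, rfl⟩
      rintro r ⟨a', _, b', _, rfl⟩
      exact Real.sqrt_nonneg _
    have hB : (0:ℝ) ≤ ∑ n, ∑ t, (a n t - b n t)^2 := by positivity
    have h2 : Real.sqrt (∑ n, ∑ t, (xinf n t - yinf n t)^2)
        ≤ Real.sqrt (∑ n, ∑ t, (a n t - b n t)^2) := by
      simpa [frobNorm, Pi.sub_apply] using hle
    exact (Real.sqrt_le_sqrt_iff hB).mp h2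
  set A : ℝ := ∑ n, ∑ t, (xinf n t - yinf n t)^2 with hA
  clear_value A
  -- step 1: the difference is constant along each column
  have hdcol : ∀ (n1 n2 : Fin N) (t0 : Fin T),
      xinf n1 t0 - yinf n1 t0 = xinf n2 t0 - yinf n2 t0 := by
    intro n1 n2 t0
    rcases eq_or_ne n1 n2 with rfl | hne
    · rfl
    set s : ℝ := ((xinf n1 t0 - yinf n1 t0) - (xinf n2 t0 - yinf n2 t0))/2 with hs
    set v : Fin N → Fin T → ℝ :=
      fun m τ => if τ = t0 then (if m = n1 then s else if m = n2 then -s else 0) else 0 with hv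
    clear_value s v
    have hbY : (fun m τ => yinf m τ + v m τ) ∈ Y := by
      rw [hYdef]
      intro τ
      have hvsum : ∑ m, v m τ = 0 := by
        by_cases hτ : τ = t0
        · rw [hτ]
          have h2 : ∑ m, v m t0 = v n1 t0 + v n2 t0 :=
            Finset.sum_eq_add n1 n2 hne (fun c _ hc => by simp [hv, hc.1, hc.2])
              (by simp) (by simp)
          rw [h2]
          simp [hv, hne, Ne.symm hne]
        · simp [hv, hτ]
      simpa [Finset.sum_add_distrib, hvsum] using hy τ
    have hkey := hmin xinf hxinfX _ hbY
    have hexp : ∑ n, ∑ t, (xinf n t - (yinf n t + v n t))^2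
        = A + 2*(∑ n, ∑ t, (xinf n t - yinf n t) * (-(v n t)))
          + ∑ n, ∑ t, (-(v n t))^2 := by
      rw [hA, ← expand_sum (fun n t => xinf n t - yinf n t) (fun n t => -(v n t))]
      exact Finset.sum_congr rfl fun n _ => Finset.sum_congr rfl fun t _ => by ring
    have hI : (∑ n, ∑ t, (xinf n t - yinf n t) * (-(v n t))) = -(2*s^2) := by
      have hIm : ∀ m : Fin N, ∑ τ, (xinf m τ - yinf m τ) * (-(v m τ))
          = (xinf m t0 - yinf m t0) * (-(v m t0)) :=
        fun m => Finset.sum_eq_single t0 (fun τ _ hτ => by simp [hv, hτ]) (by simp)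
      rw [Finset.sum_congr rfl fun m _ => hIm m]
      rw [Finset.sum_eq_add n1 n2 hne (fun c _ hc => by simp [hv, hc.1, hc.2])
        (by simp) (by simp)]
      have hv1 : v n1 t0 = s := by simp [hv]
      have hv2 : v n2 t0 = -s := by simp [hv, Ne.symm hne]
      rw [hv1, hv2]
      have h3 : xinf n1 t0 - yinf n1 t0 = (xinf n2 t0 - yinf n2 t0) + 2*s := by
        rw [hs]; ring
      rw [h3]; ring
    have hQ : (∑ n, ∑ t, (-(v n t))^2) = 2*s^2 := by
      have hQm : ∀ m : Fin N, ∑ τ, (-(v m τ))^2 = (-(v m t0))^2 :=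
        fun m => Finset.sum_eq_single t0 (fun τ _ hτ => by simp [hv, hτ]) (by simp)
      rw [Finset.sum_congr rfl fun m _ => hQm m]
      rw [Finset.sum_eq_add n1 n2 hne (fun c _ hc => by simp [hv, hc.1, hc.2])
        (by simp) (by simp)]
      have hv1 : v n1 t0 = s := by simp [hv]
      have hv2 : v n2 t0 = -s := by simp [hv, Ne.symm hne]
      rw [hv1, hv2]; ring
    rw [hexp, hI, hQ] at hkey
    have hs2 : s ^ 2 ≤ 0 := by nlinarith
    have hsq : s ^ 2 = 0 := le_antisymm hs2 (sq_nonneg s)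
    have hs0 : s = 0 := by simpa [sq, mul_self_eq_zero] using hsq
    have h4 : (xinf n1 t0 - yinf n1 t0) - (xinf n2 t0 - yinf n2 t0) = 2*s := by
      rw [hs]; ring
    rw [hs0] at h4; linarith
  -- the common column value
  set c : Fin T → ℝ := fun t => xinf ⟨0, hN⟩ t - yinf ⟨0, hN⟩ t with hcdef
  have hc : ∀ n t, xinf n t - yinf n t = c t := fun n t => hdcol n ⟨0, hN⟩ t
  clear_value c
  have hNpos : (0:ℝ) < N := by exact_mod_cast hN
  have hcol : ∀ t, (N:ℝ) * c t = (∑ n, xinf n t) - p t := by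
    intro t
    have h1 : ∑ n : Fin N, (xinf n t - yinf n t) = (∑ n, xinf n t) - p t := by
      rw [Finset.sum_sub_distrib, hy t]
    have h2 : ∑ n : Fin N, (xinf n t - yinf n t) = (N:ℝ) * c t := by
      rw [Finset.sum_congr rfl fun n _ => hc n t]
      simp [mul_comm]
    linarith
  have hT0c : ∀ t, t ∈ T0 ↔ c t < 0 := by
    intro t
    rw [hT0, Finset.mem_filter]
    constructor
    · rintro ⟨-, h⟩; nlinarith [hcol t]
    · intro h; refine ⟨Finset.mem_univ t, ?_⟩; nlinarith [hcol t]
  -- step 2: exchange inequality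
  have hexch : ∀ (n0 : Fin N) (t1 t2 : Fin T), t1 ≠ t2 →
      xinf n0 t1 < ub n0 t1 → lb n0 t2 < xinf n0 t2 → c t2 ≤ c t1 := by
    intro n0 t1 t2 htne h1 h2
    by_contra hlt
    push_neg at hlt
    set ε : ℝ := min (min (ub n0 t1 - xinf n0 t1) (xinf n0 t2 - lb n0 t2)) ((c t2 - c t1)/2)
      with hεdef
    have hε0 : 0 < ε := lt_min (lt_min (by linarith) (by linarith)) (by linarith)
    have hε1 : ε ≤ ub n0 t1 - xinf n0 t1 := le_trans (min_le_left _ _) (min_le_left _ _)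
    have hε2 : ε ≤ xinf n0 t2 - lb n0 t2 := le_trans (min_le_left _ _) (min_le_right _ _)
    have hε3 : ε ≤ (c t2 - c t1)/2 := min_le_right _ _
    clear_value ε
    set u : Fin N → Fin T → ℝ :=
      fun m τ => if m = n0 then (if τ = t1 then ε else if τ = t2 then -ε else 0) else 0 with hu
    clear_value u
    have haX : (fun m τ => xinf m τ + u m τ) ∈ X := by
      rw [hXdef]
      intro n
      constructor
      · have husum : ∑ τ, u n τ = 0 := by
          by_cases hn : n = n0
          · rw [hn]
            have h4 : ∑ τ, u n0 τ = u n0 t1 + u n0 t2 :=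
              Finset.sum_eq_add t1 t2 htne (fun τ _ hτ => by simp [hu, hτ.1, hτ.2])
                (by simp) (by simp)
            rw [h4]; simp [hu, Ne.symm htne]
          · simp [hu, hn]
        simpa [Finset.sum_add_distrib, husum] using (hx n).1
      · intro τ
        have hxb := (hx n).2 τ
        dsimp only
        simp only [hu]
        split_ifs with hn hτ1 hτ2
        · rw [hn, hτ1]
          have hxb1 := (hx n0).2 t1
          exact ⟨by linarith [hxb1.1], by linarith⟩
        · rw [hn, hτ2]
          have hxb2 := (hx n0).2 t2
          exact ⟨by linarith, by linarith [hxb2.2]⟩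
        · exact ⟨by linarith [hxb.1], by linarith [hxb.2]⟩
        · exact ⟨by linarith [hxb.1], by linarith [hxb.2]⟩
    have hkey := hmin _ haX yinf hyinfY
    have hexp : ∑ n, ∑ t, ((xinf n t + u n t) - yinf n t)^2
        = A + 2*(∑ n, ∑ t, (xinf n t - yinf n t) * (u n t))
          + ∑ n, ∑ t, (u n t)^2 := by
      rw [hA, ← expand_sum (fun n t => xinf n t - yinf n t) u]
      exact Finset.sum_congr rfl fun n _ => Finset.sum_congr rfl fun t _ => by ring
    have hI : (∑ n, ∑ t, (xinf n t - yinf n t) * (u n t)) = ε * (c t1 - c t2) := by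
      have houter : ∀ m : Fin N, m ≠ n0 → (∑ τ, (xinf m τ - yinf m τ) * (u m τ)) = 0 := by
        intro m hm
        apply Finset.sum_eq_zero
        intro τ _
        simp [hu, hm]
      rw [Finset.sum_eq_single n0 (fun m _ hm => houter m hm) (by simp)]
      have hinner : ∑ τ, (xinf n0 τ - yinf n0 τ) * (u n0 τ)
          = (xinf n0 t1 - yinf n0 t1) * (u n0 t1) + (xinf n0 t2 - yinf n0 t2) * (u n0 t2) :=
        Finset.sum_eq_add t1 t2 htne (fun τ _ hτ => by simp [hu, hτ.1, hτ.2])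
          (by simp) (by simp)
      rw [hinner, hc n0 t1, hc n0 t2]
      have hu1 : u n0 t1 = ε := by simp [hu]
      have hu2 : u n0 t2 = -ε := by simp [hu, Ne.symm htne]
      rw [hu1, hu2]; ring
    have hQ : (∑ n, ∑ t, (u n t)^2) = 2*ε^2 := by
      have houter : ∀ m : Fin N, m ≠ n0 → (∑ τ, (u m τ)^2) = 0 := by
        intro m hm
        apply Finset.sum_eq_zero
        intro τ _
        simp [hu, hm]
      rw [Finset.sum_eq_single n0 (fun m _ hm => houter m hm) (by simp)]
      have hinner : ∑ τ, (u n0 τ)^2 = (u n0 t1)^2 + (u n0 t2)^2 :=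
        Finset.sum_eq_add t1 t2 htne (fun τ _ hτ => by simp [hu, hτ.1, hτ.2])
          (by simp) (by simp)
      rw [hinner]
      have hu1 : u n0 t1 = ε := by simp [hu]
      have hu2 : u n0 t2 = -ε := by simp [hu, Ne.symm htne]
      rw [hu1, hu2]; ring
    rw [hexp, hI, hQ] at hkey
    have h5 : 0 < c t2 - c t1 := by linarith
    nlinarith [mul_le_mul_of_nonneg_left hε3 hε0.le, mul_pos hε0 h5]
  -- dichotomy per row
  have hdich : ∀ n, (∀ t ∈ T0, xinf n t = ub n t) ∨ (∀ t ∉ T0, xinf n t = lb n t) := by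
    intro n
    by_contra h
    push_neg at h
    obtain ⟨⟨t, ht, hne1⟩, ⟨t', ht', hne2⟩⟩ := h
    have htne : t ≠ t' := fun h => ht' (h ▸ ht)
    have h1 : xinf n t < ub n t := lt_of_le_of_ne ((hx n).2 t).2 hne1
    have h2 : lb n t' < xinf n t' := lt_of_le_of_ne ((hx n).2 t').1 (Ne.symm hne2)
    have := hexch n t t' htne h1 h2
    have hct : c t < 0 := (hT0c t).mp ht
    have hct' : ¬ (c t' < 0) := fun hh => ht' ((hT0c t').mpr hh)
    push_neg at hct'
    linarith
  -- membership characterization of N0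
  have hN0mem : ∀ n, n ∈ N0 ↔ E n < (∑ t ∈ T0ᶜ, lb n t) + ∑ t ∈ T0, ub n t := by
    intro n; rw [hN0, Finset.mem_filter]; simp
  -- row facts
  have hrow : ∀ n, (∑ t ∈ T0, xinf n t) + ∑ t ∈ T0ᶜ, xinf n t = E n := by
    intro n; rw [Finset.sum_add_sum_compl]; exact (hx n).1
  have hAfact : ∀ n ∉ N0, ∀ t ∈ T0, xinf n t = ub n t := by
    intro n hn
    have hge : (∑ t ∈ T0ᶜ, lb n t) + (∑ t ∈ T0, ub n t) ≤ E n := by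
      by_contra hcon; push_neg at hcon; exact hn ((hN0mem n).mpr hcon)
    rcases hdich n with h | h
    · exact h
    · intro t ht
      have hsum : ∑ t ∈ T0ᶜ, xinf n t = ∑ t ∈ T0ᶜ, lb n t :=
        Finset.sum_congr rfl fun τ hτ => h τ (by simpa using hτ)
      have hle : ∑ t ∈ T0, ub n t ≤ ∑ t ∈ T0, xinf n t := by
        have := hrow n; rw [hsum] at this; linarith
      have hzero : ∑ t ∈ T0, (ub n t - xinf n t) = 0 := by
        have h1 : ∑ t ∈ T0, (ub n t - xinf n t) ≤ 0 := by
          rw [Finset.sum_sub_distrib]; linarith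
        have h2 : 0 ≤ ∑ t ∈ T0, (ub n t - xinf n t) :=
          Finset.sum_nonneg fun τ _ => by linarith [((hx n).2 τ).2]
        linarith
      have := (Finset.sum_eq_zero_iff_of_nonneg
        (fun τ _ => by linarith [((hx n).2 τ).2] : ∀ τ ∈ T0, (0:ℝ) ≤ ub n τ - xinf n τ)).mp
        hzero t ht
      linarith
  have hBfact : ∀ n ∈ N0, ∀ t ∈ T0ᶜ, xinf n t = lb n t := by
    intro n hn
    have hlt : E n < (∑ t ∈ T0ᶜ, lb n t) + ∑ t ∈ T0, ub n t := (hN0mem n).mp hn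
    rcases hdich n with h | h
    · exfalso
      have hsum : ∑ t ∈ T0, xinf n t = ∑ t ∈ T0, ub n t :=
        Finset.sum_congr rfl fun τ hτ => h τ hτ
      have hge : ∑ t ∈ T0ᶜ, lb n t ≤ ∑ t ∈ T0ᶜ, xinf n t :=
        Finset.sum_le_sum fun τ _ => ((hx n).2 τ).1
      have := hrow n
      linarith
    · intro t ht
      exact h t (by simpa using ht)
  -- T0 is nonempty
  have hsum0 : ∑ t, ((∑ n, xinf n t) - p t) = 0 := by
    rw [Finset.sum_sub_distrib, Finset.sum_comm]
    have : ∑ n, ∑ t, xinf n t = ∑ n, E n := Finset.sum_congr rfl fun n _ => (hx n).1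
    rw [this, hpE]
    ring
  have hT0ne : T0.Nonempty := by
    by_contra hcon
    rw [Finset.not_nonempty_iff_eq_empty] at hcon
    have hall : ∀ t, p t ≤ ∑ n, xinf n t := by
      intro t
      by_contra hh
      push_neg at hh
      have : t ∈ T0 := by rw [hT0, Finset.mem_filter]; exact ⟨Finset.mem_univ t, hh⟩
      rw [hcon] at this
      exact absurd this (Finset.notMem_empty t)
    have heach : ∀ t ∈ (univ : Finset (Fin T)), ((∑ n, xinf n t) - p t) = 0 :=
      (Finset.sum_eq_zero_iff_of_nonneg
        (fun t _ => by linarith [hall t] : ∀ t ∈ (univ : Finset (Fin T)),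
          (0:ℝ) ≤ (∑ n, xinf n t) - p t)).mp hsum0
    have hxy : xinf ∈ Y := by
      rw [hYdef]
      intro t
      have := heach t (Finset.mem_univ t)
      linarith
    have : xinf ∈ X ∩ Y := ⟨hxinfX, hxy⟩
    rw [hdisjoint] at this
    exact this
  -- final algebra
  have hEsplit : ∑ n ∈ N0, E n
      = (∑ n ∈ N0, ∑ t ∈ T0, xinf n t) + ∑ n ∈ N0, ∑ t ∈ T0ᶜ, lb n t := by
    rw [← Finset.sum_add_distrib]
    refine Finset.sum_congr rfl fun n hn => ?_
    have h1 : ∑ t ∈ T0ᶜ, xinf n t = ∑ t ∈ T0ᶜ, lb n t :=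
      Finset.sum_congr rfl fun τ hτ => hBfact n hn τ hτ
    have := hrow n
    linarith
  have hubsub : ∑ t ∈ T0, ∑ n ∈ N0ᶜ, ub n t = ∑ t ∈ T0, ∑ n ∈ N0ᶜ, xinf n t := by
    refine Finset.sum_congr rfl fun t ht => Finset.sum_congr rfl fun n hn => ?_
    exact (hAfact n (by simpa using hn) t ht).symm
  have hcomb : (∑ n ∈ N0, ∑ t ∈ T0, xinf n t) + ∑ t ∈ T0, ∑ n ∈ N0ᶜ, xinf n t
      = ∑ t ∈ T0, ∑ n, xinf n t := by
    rw [Finset.sum_comm, ← Finset.sum_add_distrib]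
    exact Finset.sum_congr rfl fun t _ => Finset.sum_add_sum_compl N0 _
  have hfinal : ∑ t ∈ T0, ((∑ n, xinf n t) - p t) < 0 := by
    refine Finset.sum_neg (fun t ht => ?_) hT0ne
    rw [hT0, Finset.mem_filter] at ht
    linarith [ht.2]
  have hlbswap : ∑ t ∈ T0ᶜ, ∑ n ∈ N0, lb n t = ∑ n ∈ N0, ∑ t ∈ T0ᶜ, lb n t :=
    Finset.sum_comm
  rw [Finset.sum_sub_distrib] at hfinal
  linarith [hEsplit, hubsub, hcomb, hlbswap]
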